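/- arXiv:2108.01524 — 3 statements merged into one kernel-verified Lean document; each statement's English description precedes it below -/
import Mathlib

section
/- The tropical complex hyperfield TC, with underlying set ℂ, standard complex multiplication, and hyperaddition z ⊞ w = {c ∈ ℂ : |c| ≤ |z|} if w = -z; {z} if |z| > |w|; {w} if |w| > |z|; and the shortest closed arc of radius |z| connecting z and w if |z| = |w| and z ≠ ±w, is a hyperfield. -/
open Set
open scoped Classical

/-- The axioms of a (Krasner) hyperfield on a carrier `H`, for a multivalued
addition `add`, multiplication `mul`, additive inverse `neg`, and constants. -/
structure IsHyperfield {H : Type*} (add : H → H → Set H) (mul : H → H → H)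
    (neg : H → H) (zero one : H) : Prop where
  add_nonempty : ∀ x y, (add x y).Nonempty
  hadd_comm : ∀ x y, add x y = add y x
  hadd_assoc : ∀ x y z, (⋃ w ∈ add x y, add w z) = ⋃ w ∈ add y z, add x w
  zero_hadd : ∀ x, add zero x = {x}
  hneg_add : ∀ x, zero ∈ add x (neg x)
  hneg_unique : ∀ x y, zero ∈ add x y → y = neg x
  reversible : ∀ x y z, x ∈ add y z → z ∈ add x (neg y)
  hmul_comm : ∀ x y, mul x y = mul y x
  hmul_assoc : ∀ x y z, mul (mul x y) z = mul x (mul y z)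
  one_hmul : ∀ x, mul one x = x
  zero_hmul : ∀ x, mul zero x = zero
  hdistrib : ∀ a x y, (mul a) '' (add x y) = add (mul a x) (mul a y)
  zero_ne_one : zero ≠ one
  exists_inv : ∀ x, x ≠ zero → ∃ y, mul x y = one

/-- Multivalued hypersum of a list of elements. -/
def hsum {H : Type*} (add : H → H → Set H) (zero : H) : List H → Set H
  | [] => {zero}
  | a :: l => ⋃ b ∈ hsum add zero l, add a b

/-- Powers with respect to a monoid multiplication. -/
def hpow {H : Type*} (mul : H → H → H) (one : H) (a : H) : ℕ → H
  | 0 => one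
  | n + 1 => mul a (hpow mul one a n)

/-- Multivalued evaluation of the univariate polynomial `⊞_{i=0}^n c_i ⊙ X^i` at `a`. -/
def evalPoly {H : Type*} (add : H → H → Set H) (mul : H → H → H) (zero one : H)
    (n : ℕ) (c : ℕ → H) (a : H) : Set H :=
  hsum add zero ((List.range (n + 1)).map fun i => mul (c i) (hpow mul one a i))

/-- Multivalued evaluation of a multivariate polynomial given by a list of
terms (coefficient, exponent vector) at a point `x`. -/
def evalMPoly {H : Type*} (add : H → H → Set H) (mul : H → H → H) (zero one : H)
    {n : ℕ} (terms : List (H × (Fin n → ℕ))) (x : Fin n → H) : Set H :=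
  hsum add zero (terms.map fun t =>
    mul t.1 ((List.ofFn fun j => hpow mul one (x j) (t.2 j)).foldr mul one))

/-- Hyperfield homomorphism axioms. -/
structure IsHyperfieldHom {H1 H2 : Type*}
    (add1 : H1 → H1 → Set H1) (mul1 : H1 → H1 → H1) (zero1 one1 : H1)
    (add2 : H2 → H2 → Set H2) (mul2 : H2 → H2 → H2) (zero2 one2 : H2)
    (f : H1 → H2) : Prop where
  map_zero : f zero1 = zero2
  map_one : f one1 = one2
  map_mul : ∀ x y, f (mul1 x y) = mul2 (f x) (f y)
  map_add : ∀ x y, f '' (add1 x y) ⊆ add2 (f x) (f y)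

/-- `f` is relatively algebraically closed: every root of the coefficientwise
push-forward of a univariate polynomial lifts through `f` to a root. -/
def IsRAC {H1 H2 : Type*}
    (add1 : H1 → H1 → Set H1) (mul1 : H1 → H1 → H1) (zero1 one1 : H1)
    (add2 : H2 → H2 → Set H2) (mul2 : H2 → H2 → H2) (zero2 one2 : H2)
    (f : H1 → H2) : Prop :=
  ∀ (n : ℕ) (c : ℕ → H1) (b : H2),
    zero2 ∈ evalPoly add2 mul2 zero2 one2 n (fun i => f (c i)) b →
    ∃ a : H1, f a = b ∧ zero1 ∈ evalPoly add1 mul1 zero1 one1 n c a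

/-- Tropical hyperaddition on `ℝ ∪ {-∞}`. -/
noncomputable def Tadd (x y : WithBot ℝ) : Set (WithBot ℝ) :=
  if x = y then {z | z ≤ x} else {max x y}

/-- Tropical multiplication: addition of extended reals. -/
noncomputable def Tmul (x y : WithBot ℝ) : WithBot ℝ := x + y

/-- Hyperaddition of the tropical complex hyperfield `TC` on `ℂ`. -/
noncomputable def TCadd (z w : ℂ) : Set ℂ :=
  if w = -z then {c | ‖c‖ ≤ ‖z‖}
  else if ‖w‖ < ‖z‖ then {z}
  else if ‖z‖ < ‖w‖ then {w}
  else {c | ∃ t : ℝ, 0 ≤ t ∧ t ≤ 1 ∧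
    c = ((‖z‖ / ‖(t : ℂ) * z + (1 - (t : ℂ)) * w‖ : ℝ) : ℂ) *
      ((t : ℂ) * z + (1 - (t : ℂ)) * w)}

/-- The homomorphism `η(z) = log |z|` from `TC` to the tropical hyperfield. -/
noncomputable def eta (z : ℂ) : WithBot ℝ :=
  if z = 0 then ⊥ else ((Real.log ‖z‖ : ℝ) : WithBot ℝ)

/-- Hyperaddition of the hyperfield of signs. -/
noncomputable def Sadd (x y : SignType) : Set SignType :=
  if x = 0 then {y} else if y = 0 then {x} else if x = y then {x} else Set.univ

/-- Hyperaddition of the Krasner hyperfield on `Bool` (`false = 0`, `true = 1`). -/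
def Kadd (x y : Bool) : Set Bool :=
  if x = false then {y} else if y = false then {x} else Set.univ

/-- `c ∈ (X ⊞ -a) ⊙ d` : the coefficients `c` arise from multiplying the linear
factor `X ⊞ (-a)` with the polynomial with coefficients `d`. -/
def LinFactor {H : Type*} (add : H → H → Set H) (mul : H → H → H) (zero : H)
    (neg : H → H) (a : H) (c d : ℕ → H) : Prop :=
  ∀ i, c i ∈ add (if i = 0 then zero else d (i - 1)) (mul (neg a) (d i))

/-- `MultGe … a n c k` : the multiplicity of `a` as a root of the degree-`n`
polynomial with coefficients `c` is at least `k` (recursive peeling of linear factors). -/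
def MultGe {H : Type*} (add : H → H → Set H) (mul : H → H → H) (zero one : H)
    (neg : H → H) (a : H) : ℕ → (ℕ → H) → ℕ → Prop
  | _, _, 0 => True
  | n, c, k + 1 => zero ∈ evalPoly add mul zero one n c a ∧
      ∃ d : ℕ → H, (∀ i, n ≤ i → d i = zero) ∧ LinFactor add mul zero neg a c d ∧
        MultGe add mul zero one neg a (n - 1) d k

/-- The multiplicity of `a` as a root. -/
noncomputable def hmult {H : Type*} (add : H → H → Set H) (mul : H → H → H)
    (zero one : H) (neg : H → H) (n : ℕ) (c : ℕ → H) (a : H) : ℕ :=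
  sSup {k | MultGe add mul zero one neg a n c k}

/-- The multiplicity bound: the sum of root multiplicities is at most the degree. -/
def MultBound {H : Type*} (add : H → H → Set H) (mul : H → H → H)
    (zero one : H) (neg : H → H) : Prop :=
  ∀ (n : ℕ) (c : ℕ → H), c n ≠ zero →
    ∀ S : Finset H, (S.sum fun a => hmult add mul zero one neg n c a) ≤ n

/-- The multiplicity equality: the sum of root multiplicities equals the degree. -/
def MultEq {H : Type*} (add : H → H → Set H) (mul : H → H → H)
    (zero one : H) (neg : H → H) : Prop :=
  MultBound add mul zero one neg ∧
    ∀ (n : ℕ) (c : ℕ → H), c n ≠ zero →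
      ∃ S : Finset H, (S.sum fun a => hmult add mul zero one neg n c a) = n

/-- Iterated splitting off of a list of linear factors: `c ∈ (X ⊞ -a₁) ⊙ ⋯ ⊙ (X ⊞ -aₘ) ⊙ d`. -/
def MultiLinFactor {H : Type*} (add : H → H → Set H) (mul : H → H → H) (zero : H)
    (neg : H → H) : List H → (ℕ → H) → (ℕ → H) → Prop
  | [], c, d => c = d
  | a :: l, c, d => ∃ e : ℕ → H, LinFactor add mul zero neg a c e ∧
      MultiLinFactor add mul zero neg l e d

/-- The inheritance property: any sub-multiset of the multiset of roots (with
multiplicity) of size at most the degree can be split off as linear factors. -/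
def Inheritance {H : Type*} (add : H → H → Set H) (mul : H → H → H)
    (zero one : H) (neg : H → H) : Prop :=
  ∀ (n : ℕ) (c : ℕ → H), c n ≠ zero →
    ∀ l : List H, l.length ≤ n →
      (∀ a : H, (l.filter fun x => x = a).length ≤ hmult add mul zero one neg n c a) →
      ∃ q : ℕ → H, MultiLinFactor add mul zero neg l c q

namespace TCaux

noncomputable def prj (r : ℝ) (u : ℂ) : ℂ := ((r / ‖u‖ : ℝ) : ℂ) * u

lemma prj_smul (r : ℝ) {d : ℝ} (hd : 0 < d) (u : ℂ) : prj r (d • u) = prj r u := by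
  rcases eq_or_ne u 0 with rfl | hu
  · simp [prj]
  · unfold prj
    rw [Complex.real_smul]
    have habs : ‖(d:ℂ) * u‖ = d * ‖u‖ := by
      rw [norm_mul, Complex.norm_real, Real.norm_eq_abs, abs_of_pos hd]
    rw [habs]
    have h1 : r / (d * ‖u‖) = (r / ‖u‖) * d⁻¹ := by
      field_simp
    rw [h1]
    push_cast
    have hd' : (d:ℂ) ≠ 0 := by exact_mod_cast hd.ne'
    field_simp

lemma prj_abs {r : ℝ} (hr : 0 ≤ r) {u : ℂ} (hu : u ≠ 0) : ‖prj r u‖ = r := by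
  unfold prj
  rw [norm_mul, Complex.norm_real, Real.norm_eq_abs]
  have h0 : ‖u‖ ≠ 0 := by simpa using hu
  rw [abs_of_nonneg (div_nonneg hr (norm_nonneg u))]
  field_simp

lemma prj_of_abs {r : ℝ} {u : ℂ} (h : ‖u‖ = r) (hu : u ≠ 0) : prj r u = u := by
  unfold prj
  rw [h, div_self, Complex.ofReal_one, one_mul]
  rw [← h]; simpa using hu

lemma seg_zero {y z : ℂ} (habs : ‖y‖ = ‖z‖) (hy : y ≠ 0)
    (h : (0:ℂ) ∈ segment ℝ y z) : z = -y := by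
  obtain ⟨a, b, ha, hb, hab, hsum⟩ := h
  have hbne : b ≠ 0 := by
    rintro rfl
    have ha1 : a = 1 := by linarith
    subst ha1
    simp at hsum
    exact hy hsum
  have hz : z = (-(a / b)) • y := by
    have h1 : b • z = (-a) • y := by
      rw [neg_smul]
      exact eq_neg_of_add_eq_zero_right hsum
    calc z = b⁻¹ • (b • z) := (inv_smul_smul₀ hbne z).symm
    _ = b⁻¹ • ((-a) • y) := by rw [h1]
    _ = (-(a/b)) • y := by rw [smul_smul]; congr 1; field_simp
  have h2 : ‖z‖ = (a/b) * ‖y‖ := by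
    rw [hz, Complex.real_smul, norm_mul, Complex.norm_real, Real.norm_eq_abs, abs_neg,
      abs_of_nonneg (div_nonneg ha hb)]
  have hy0 : ‖y‖ ≠ 0 := by simpa using hy
  have hdiv : a / b = 1 := by
    rw [← habs] at h2
    have : (a/b - 1) * ‖y‖ = 0 := by linarith
    rcases mul_eq_zero.mp this with h | h
    · linarith
    · exact absurd h hy0
  rw [hz, hdiv]
  norm_num

lemma TCadd_neg (z : ℂ) : TCadd z (-z) = {c | ‖c‖ ≤ ‖z‖} := by
  unfold TCadd; rw [if_pos rfl]

lemma TCadd_big {z w : ℂ} (h : ‖w‖ < ‖z‖) : TCadd z w = {z} := by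
  unfold TCadd
  rw [if_neg, if_pos h]
  intro he
  rw [he] at h
  simp at h

lemma TCadd_small {z w : ℂ} (h : ‖z‖ < ‖w‖) : TCadd z w = {w} := by
  unfold TCadd
  rw [if_neg, if_neg (not_lt.mpr h.le), if_pos h]
  intro he
  rw [he] at h
  simp at h

lemma TCadd_arc {z w : ℂ} (hw : w ≠ -z) (habs : ‖w‖ = ‖z‖) :
    TCadd z w = prj (‖z‖) '' segment ℝ z w := by
  unfold TCadd
  rw [if_neg hw, if_neg (by rw [habs]; exact lt_irrefl _),
    if_neg (by rw [habs]; exact lt_irrefl _)]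
  ext c
  simp only [mem_setOf_eq, mem_image]
  constructor
  · rintro ⟨t, ht0, ht1, rfl⟩
    refine ⟨t • z + (1-t) • w, ⟨t, 1-t, ht0, by linarith, by ring, rfl⟩, ?_⟩
    unfold prj
    push_cast
    rw [Complex.real_smul, Complex.real_smul]
    push_cast
    ring_nf
  · rintro ⟨p, ⟨a, b, ha, hb, hab, rfl⟩, rfl⟩
    refine ⟨a, ha, by linarith, ?_⟩
    unfold prj
    have hb' : b = 1 - a := by linarith
    subst hb'
    rw [Complex.real_smul, Complex.real_smul]
    push_cast
    ring_nf

lemma TCadd_abs_le {z w c : ℂ} (h : c ∈ TCadd z w) :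
    ‖c‖ ≤ max (‖z‖) (‖w‖) := by
  rcases eq_or_ne w (-z) with rfl | hw
  · rw [TCadd_neg] at h
    exact le_trans h (by simp)
  rcases lt_trichotomy (‖w‖) (‖z‖) with hlt | heq | hgt
  · rw [TCadd_big hlt] at h
    rw [h]; exact le_max_left _ _
  · have hz0 : z ≠ 0 := by
      rintro rfl
      apply hw
      rw [show (-0:ℂ) = 0 by ring]
      have := heq
      simp at this
      exact this
    rw [TCadd_arc hw heq] at h
    obtain ⟨p, hp, rfl⟩ := h
    have hp0 : p ≠ 0 := by
      intro h0
      apply hw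
      exact seg_zero heq.symm hz0 (h0 ▸ hp)
    rw [prj_abs (norm_nonneg z) hp0]
    exact le_max_left _ _
  · rw [TCadd_small hgt] at h
    rw [h]; exact le_max_right _ _

lemma TCadd_nonempty (z w : ℂ) : (TCadd z w).Nonempty := by
  rcases eq_or_ne w (-z) with rfl | hw
  · exact ⟨0, by rw [TCadd_neg]; simp⟩
  rcases lt_trichotomy (‖w‖) (‖z‖) with hlt | heq | hgt
  · exact ⟨z, by rw [TCadd_big hlt]; rfl⟩
  · exact ⟨_, by rw [TCadd_arc hw heq]; exact ⟨z, left_mem_segment ℝ z w, rfl⟩⟩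
  · exact ⟨w, by rw [TCadd_small hgt]; rfl⟩

lemma TCadd_comm (z w : ℂ) : TCadd z w = TCadd w z := by
  rcases eq_or_ne w (-z) with rfl | hw
  · rw [TCadd_neg, show TCadd (-z) z = TCadd (-z) (-(-z)) by rw [neg_neg], TCadd_neg]
    simp
  have hz : z ≠ -w := fun h => hw (by rw [h]; ring)
  rcases lt_trichotomy (‖w‖) (‖z‖) with hlt | heq | hgt
  · rw [TCadd_big hlt, TCadd_small hlt]
  · rw [TCadd_arc hw heq, TCadd_arc hz heq.symm, heq, segment_symm]
  · rw [TCadd_small hgt, TCadd_big hgt]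

lemma union_disk {x : ℂ} {r : ℝ} (hx : ‖x‖ ≤ r) :
    (⋃ w ∈ {w : ℂ | ‖w‖ ≤ r}, TCadd x w) = {c : ℂ | ‖c‖ ≤ r} := by
  apply subset_antisymm
  · intro c hc
    simp only [mem_iUnion, exists_prop] at hc
    obtain ⟨w, hw, hcw⟩ := hc
    exact le_trans (TCadd_abs_le hcw) (max_le hx hw)
  · intro c hc
    simp only [mem_setOf_eq] at hc
    simp only [mem_iUnion, exists_prop]
    rcases le_or_gt (‖c‖) (‖x‖) with h | h
    · exact ⟨-x, by simpa using hx, by rw [TCadd_neg]; exact h⟩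
    · exact ⟨c, hc, by rw [TCadd_small h]; rfl⟩


lemma comb_zero {u v : ℂ} {a b : ℝ} (hb : b ≠ 0) (hsum : a • u + b • v = 0) :
    v = (-(a / b)) • u := by
  have h1 : b • v = (-a) • u := by
    rw [neg_smul]
    exact neg_eq_of_add_eq_zero_right hsum |>.symm
  calc v = b⁻¹ • (b • v) := (inv_smul_smul₀ hb v).symm
  _ = b⁻¹ • ((-a) • u) := by rw [h1]
  _ = (-(a/b)) • u := by rw [smul_smul]; congr 1; field_simp

lemma prj_seg_sub (r : ℝ) (x s : ℂ) {d : ℝ} (hd : 0 < d) :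
    prj r '' segment ℝ x (d • s) ⊆ prj r '' segment ℝ x s := by
  rintro _ ⟨p, ⟨a, b, ha, hb, hab, rfl⟩, rfl⟩
  have hD : 0 < a + b * d := by
    rcases eq_or_lt_of_le ha with h | h
    · have hb1 : b = 1 := by linarith
      rw [← h, hb1]; simpa using hd
    · nlinarith
  refine ⟨(a/(a+b*d)) • x + (b*d/(a+b*d)) • s,
    ⟨a/(a+b*d), b*d/(a+b*d), by positivity, by positivity, by field_simp, rfl⟩, ?_⟩
  have hp : (a/(a+b*d)) • x + (b*d/(a+b*d)) • s = (a+b*d)⁻¹ • (a • x + b • (d • s)) := by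
    rw [smul_add, smul_smul, smul_smul, smul_smul]
    congr 2 <;> field_simp
  rw [hp, prj_smul r (by positivity) _]

lemma prj_seg (r : ℝ) (x s : ℂ) {d : ℝ} (hd : 0 < d) :
    prj r '' segment ℝ x (d • s) = prj r '' segment ℝ x s := by
  apply subset_antisymm (prj_seg_sub r x s hd)
  have h2 := prj_seg_sub r x (d • s) (show (0:ℝ) < d⁻¹ by positivity)
  rw [inv_smul_smul₀ hd.ne'] at h2
  exact h2

lemma zero_mem_hull_iff {x y z : ℂ} {r : ℝ} (hr : 0 < r) (hx : ‖x‖ = r)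
    (hy : ‖y‖ = r) (hz : ‖z‖ = r) (hzy : z ≠ -y) :
    (0:ℂ) ∈ convexHull ℝ {x, y, z} ↔ ∃ s ∈ segment ℝ y z, prj r s = -x := by
  have hx0 : x ≠ 0 := fun h => by rw [h] at hx; simp at hx; linarith
  have hy0 : y ≠ 0 := fun h => by rw [h] at hy; simp at hy; linarith
  rw [show ({x,y,z} : Set ℂ) = insert x {y,z} from rfl,
    convexHull_insert ⟨y, by simp⟩, mem_convexJoin]
  constructor
  · rintro ⟨x', hx', s, hs, h0⟩
    rw [mem_singleton_iff] at hx'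
    subst hx'
    rw [convexHull_pair] at hs
    refine ⟨s, hs, ?_⟩
    obtain ⟨a, b, ha, hb, hab, hsum⟩ := h0
    have hs0 : s ≠ 0 := by
      rintro rfl
      exact hzy (seg_zero (hy.trans hz.symm) hy0 hs)
    have hbne : b ≠ 0 := by
      rintro rfl
      have ha1 : a = 1 := by linarith
      rw [ha1] at hsum
      simp at hsum
      exact hx0 hsum
    have hane : a ≠ 0 := by
      rintro rfl
      have hb1 : b = 1 := by linarith
      rw [hb1] at hsum
      simp at hsum
      exact hs0 hsum
    have hsx : s = (-(a/b)) • x' := comb_zero hbne hsum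
    have hab' : 0 < a / b := by
      rcases lt_or_eq_of_le ha with h | h
      · rcases lt_or_eq_of_le hb with h' | h'
        · positivity
        · exact absurd h'.symm hbne
      · exact absurd h.symm hane
    have : s = (a/b) • (-x') := by rw [hsx]; module
    rw [this, prj_smul r hab' (-x'), prj_of_abs (by simpa using hx) (by simpa using hx0)]
  · rintro ⟨s, hs, hprj⟩
    have hs0 : s ≠ 0 := by
      rintro rfl
      have h0 : (0:ℂ) = -x := by rw [← hprj]; unfold prj; simp
      exact hx0 (neg_eq_zero.mp h0.symm)
    have habs0 : (0:ℝ) < ‖s‖ := by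
      have := norm_nonneg s
      rcases eq_or_lt_of_le this with h | h
      · exact absurd h.symm (by simpa using hs0)
      · exact h
    refine ⟨x, mem_singleton x, s, by rw [convexHull_pair]; exact hs, ?_⟩
    have hxs : x = -((r/‖s‖) • s) := by
      have : prj r s = (r/‖s‖) • s := by
        unfold prj; rw [Complex.real_smul]
      rw [this] at hprj
      rw [show x = -(-x) by ring, ← hprj]
    refine ⟨‖s‖ / (‖s‖ + r), r / (‖s‖ + r),
      by positivity, by positivity, by field_simp, ?_⟩
    rw [hxs]
    rw [smul_neg, smul_smul]
    have hcoef : ‖s‖ / (‖s‖ + r) * (r / ‖s‖)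
        = r / (‖s‖ + r) := by field_simp
    rw [hcoef]
    module


lemma union_arc {x y z : ℂ} {r : ℝ} (hr : 0 < r) (hx : ‖x‖ = r)
    (hy : ‖y‖ = r) (hz : ‖z‖ = r) :
    (⋃ w ∈ TCadd y z, TCadd x w) =
      if (0:ℂ) ∈ convexHull ℝ {x, y, z} then {c : ℂ | ‖c‖ ≤ r}
      else prj r '' convexHull ℝ {x, y, z} := by
  have hx0 : x ≠ 0 := fun h => by rw [h] at hx; simp at hx; linarith
  have hy0 : y ≠ 0 := fun h => by rw [h] at hy; simp at hy; linarith
  rcases eq_or_ne z (-y) with rfl | hzy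
  · have h0 : (0:ℂ) ∈ convexHull ℝ {x, y, -y} := by
      apply convexHull_mono (show ({y, -y}:Set ℂ) ⊆ {x, y, -y} by
        intro a ha; simp at ha ⊢; tauto)
      rw [convexHull_pair]
      exact ⟨1/2, 1/2, by norm_num, by norm_num, by norm_num, by module⟩
    rw [if_pos h0, TCadd_neg, hy, union_disk hx.le]
  · rw [TCadd_arc hzy (hz.trans hy.symm), hy]
    have hsz : ∀ s ∈ segment ℝ y z, s ≠ 0 := by
      intro s hs h
      exact hzy (seg_zero (hy.trans hz.symm) hy0 (h ▸ hs))
    by_cases h0 : (0:ℂ) ∈ convexHull ℝ {x,y,z}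
    · rw [if_pos h0]
      obtain ⟨s, hs, hprj⟩ := (zero_mem_hull_iff hr hx hy hz hzy).mp h0
      apply subset_antisymm
      · intro c hc
        simp only [mem_iUnion, exists_prop] at hc
        obtain ⟨w, hw, hcw⟩ := hc
        obtain ⟨s', hs', rfl⟩ := hw
        have habs : ‖prj r s'‖ = r := prj_abs hr.le (hsz s' hs')
        calc ‖c‖ ≤ max (‖x‖) (‖prj r s'‖) :=
              TCadd_abs_le hcw
        _ ≤ r := by rw [hx, habs]; simp
      · intro c hc
        simp only [mem_iUnion, exists_prop]
        refine ⟨-x, ⟨s, hs, hprj⟩, ?_⟩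
        rw [TCadd_neg, hx]
        exact hc
    · rw [if_neg h0, biUnion_image]
      have hstep : ∀ s ∈ segment ℝ y z, TCadd x (prj r s) = prj r '' segment ℝ x s := by
        intro s hs
        have hs0 : s ≠ 0 := hsz s hs
        have habs : ‖prj r s‖ = ‖x‖ := by
          rw [prj_abs hr.le hs0, hx]
        have hwx : prj r s ≠ -x :=
          fun h => h0 ((zero_mem_hull_iff hr hx hy hz hzy).mpr ⟨s, hs, h⟩)
        rw [TCadd_arc hwx habs, hx]
        have habs0 : 0 < ‖s‖ := by
          rcases eq_or_lt_of_le (norm_nonneg s) with h | h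
          · exact absurd h.symm (by simpa using hs0)
          · exact h
        have hps : prj r s = (r / ‖s‖) • s := by
          unfold prj; rw [Complex.real_smul]
        rw [hps, prj_seg r x s (by positivity)]
      rw [show ({x,y,z} : Set ℂ) = insert x {y,z} from rfl,
        convexHull_insert ⟨y, by simp⟩, convexHull_pair]
      ext c
      simp only [mem_iUnion, exists_prop, mem_image]
      constructor
      · rintro ⟨s, hs, hc⟩
        rw [hstep s hs] at hc
        obtain ⟨p, hp, rfl⟩ := hc
        exact ⟨p, by rw [mem_convexJoin]; exact ⟨x, mem_singleton x, s, hs, hp⟩, rfl⟩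
      · rintro ⟨p, hp, rfl⟩
        rw [mem_convexJoin] at hp
        obtain ⟨x', hx', s, hs, hp⟩ := hp
        rw [mem_singleton_iff] at hx'
        rw [hx'] at hp
        exact ⟨s, hs, by rw [hstep s hs]; exact ⟨p, hp, rfl⟩⟩


noncomputable def Q (x y z : ℂ) : Set ℂ := ⋃ w ∈ TCadd y z, TCadd x w

lemma union_const {S : Set ℂ} (hS : S.Nonempty) {x : ℂ}
    (h : ∀ w ∈ S, TCadd x w = {x}) : (⋃ w ∈ S, TCadd x w) = {x} := by
  ext c
  simp only [mem_iUnion, exists_prop]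
  constructor
  · rintro ⟨w, hw, hc⟩
    rw [h w hw] at hc
    exact hc
  · intro hc
    obtain ⟨w, hw⟩ := hS
    exact ⟨w, hw, by rw [h w hw]; exact hc⟩

lemma union_sing {S : Set ℂ} {y : ℂ} (h : ∀ w ∈ S, TCadd y w = {w}) :
    (⋃ w ∈ S, TCadd y w) = S := by
  ext c
  simp only [mem_iUnion, exists_prop]
  constructor
  · rintro ⟨w, hw, hc⟩
    rw [h w hw] at hc
    rw [mem_singleton_iff] at hc
    rw [hc]; exact hw
  · intro hc
    exact ⟨c, hc, by rw [h c hc]; rfl⟩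

lemma Q_swap (x y z : ℂ) : Q x y z = Q x z y := by
  unfold Q; rw [TCadd_comm]

lemma Q_biUnion_singleton (x w : ℂ) : (⋃ u ∈ ({w} : Set ℂ), TCadd x u) = TCadd x w := by
  simp

lemma Qcyc_max {x y z : ℂ} (hyx : ‖y‖ ≤ ‖x‖)
    (hzx : ‖z‖ ≤ ‖x‖) : Q x y z = Q y z x := by
  unfold Q
  rcases eq_or_lt_of_le hyx with hy | hy
  · rcases eq_or_lt_of_le hzx with hz | hz
    · -- |y| = |x|, |z| = |x|
      rcases eq_or_lt_of_le (norm_nonneg x) with hr | hr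
      · have hxx : x = 0 := by
          have : ‖x‖ = 0 := hr.symm
          simpa using this
        have hyy : y = 0 := by
          have : ‖y‖ = 0 := hy.trans hr.symm
          simpa using this
        have hzz : z = 0 := by
          have : ‖z‖ = 0 := hz.trans hr.symm
          simpa using this
        subst hxx; subst hyy; subst hzz
        rfl
      · rw [union_arc hr rfl hy hz, union_arc hr hy hz rfl,
          show ({y,z,x} : Set ℂ) = {x,y,z} by ext a; simp; tauto]
    · -- |y| = |x| > |z| : case (ii)
      rw [TCadd_big (show ‖z‖ < ‖y‖ from hy.symm ▸ hz),
        Q_biUnion_singleton, TCadd_small hz, Q_biUnion_singleton, TCadd_comm]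
  · rcases eq_or_lt_of_le hzx with hz | hz
    · -- |z| = |x| > |y| : case (iii)
      have hyz : ‖y‖ < ‖z‖ := hz.symm ▸ hy
      rw [TCadd_small hyz, Q_biUnion_singleton]
      rcases eq_or_ne x (-z) with hxz | hxz
      · rw [show TCadd z x = {c | ‖c‖ ≤ ‖z‖} by
            rw [hxz]; exact TCadd_neg z]
        rw [union_disk hyz.le, hxz, TCadd_comm, TCadd_neg]
      · rw [TCadd_comm x z]
        rw [union_sing]
        intro w hw
        have hz0 : z ≠ 0 := by
          intro h
          rw [h] at hyz
          simpa using lt_of_le_of_lt (norm_nonneg y) hyz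
        rw [TCadd_arc hxz hz.symm] at hw
        obtain ⟨s, hs, rfl⟩ := hw
        have hs0 : s ≠ 0 := by
          intro h
          exact hxz (seg_zero hz hz0 (h ▸ hs))
        apply TCadd_small
        rw [prj_abs (norm_nonneg z) hs0]
        exact hyz
    · -- |y| < |x|, |z| < |x| : case (i)
      have hLHS : (⋃ w ∈ TCadd y z, TCadd x w) = {x} := by
        apply union_const (TCadd_nonempty y z)
        intro w hw
        exact TCadd_big (lt_of_le_of_lt (TCadd_abs_le hw) (max_lt hy hz))
      rw [hLHS, TCadd_small hz, Q_biUnion_singleton, TCadd_small hy]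


lemma Qcyc (x y z : ℂ) : Q x y z = Q y z x := by
  rcases le_total (‖y‖) (‖x‖) with h1 | h1
  · rcases le_total (‖z‖) (‖x‖) with h2 | h2
    · exact Qcyc_max h1 h2
    · -- z max
      calc Q x y z = Q z x y := (Qcyc_max h2 (h1.trans h2)).symm
      _ = Q z y x := Q_swap z x y
      _ = Q y x z := Qcyc_max (h1.trans h2) h2
      _ = Q y z x := Q_swap y x z
  · rcases le_total (‖z‖) (‖y‖) with h2 | h2
    · -- y max
      calc Q x y z = Q x z y := Q_swap x y z
      _ = Q y x z := (Qcyc_max h1 h2).symm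
      _ = Q y z x := Q_swap y x z
    · -- z max
      calc Q x y z = Q z x y := (Qcyc_max (h1.trans h2) h2).symm
      _ = Q z y x := Q_swap z x y
      _ = Q y x z := Qcyc_max h2 (h1.trans h2)
      _ = Q y z x := Q_swap y x z

lemma TCadd_assoc (x y z : ℂ) :
    (⋃ w ∈ TCadd x y, TCadd w z) = ⋃ w ∈ TCadd y z, TCadd x w := by
  have h1 : (⋃ w ∈ TCadd x y, TCadd w z) = Q z x y :=
    Set.iUnion₂_congr fun w _ => TCadd_comm w z
  rw [h1, Qcyc z x y]
  rfl


lemma TCadd_zero_zero : TCadd 0 0 = {0} := by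
  have h := TCadd_neg 0
  rw [neg_zero] at h
  rw [h]
  ext c
  simp only [mem_setOf_eq, norm_zero, mem_singleton_iff]
  rw [show (‖c‖ ≤ 0) ↔ (‖c‖ = 0) from
    ⟨fun h' => le_antisymm h' (norm_nonneg c), le_of_eq⟩, norm_eq_zero]

lemma TCadd_zero_hadd (x : ℂ) : TCadd 0 x = {x} := by
  rcases eq_or_ne x 0 with rfl | hx
  · exact TCadd_zero_zero
  · exact TCadd_small (by simpa using norm_pos_iff.mpr hx)

lemma abs_pos_of_ne {x : ℂ} (hx : x ≠ 0) : 0 < ‖x‖ := norm_pos_iff.mpr hx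

lemma TCadd_hneg_unique (x y : ℂ) (h : (0:ℂ) ∈ TCadd x y) : y = -x := by
  rcases eq_or_ne y (-x) with rfl | hy
  · rfl
  exfalso
  rcases lt_trichotomy (‖y‖) (‖x‖) with hlt | heq | hgt
  · rw [TCadd_big hlt, mem_singleton_iff] at h
    rw [← h] at hlt
    simpa using lt_of_le_of_lt (norm_nonneg y) hlt
  · have hx0 : x ≠ 0 := by
      rintro rfl
      apply hy
      rw [neg_zero]
      simpa using heq
    rw [TCadd_arc hy heq] at h
    obtain ⟨s, hs, hps⟩ := h
    have hs0 : s ≠ 0 := fun h' => hy (seg_zero heq.symm hx0 (h' ▸ hs))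
    have := prj_abs (norm_nonneg x) hs0
    rw [hps] at this
    simp at this
    exact hx0 (by simpa using this.symm)
  · rw [TCadd_small hgt, mem_singleton_iff] at h
    rw [← h] at hgt
    simpa using lt_of_le_of_lt (norm_nonneg x) hgt

lemma TCadd_reversible (x y z : ℂ) (h : x ∈ TCadd y z) : z ∈ TCadd x (-y) := by
  rcases eq_or_ne z (-y) with rfl | hzy
  · rw [TCadd_neg] at h
    have h' : ‖x‖ ≤ ‖y‖ := h
    rcases eq_or_lt_of_le h' with heq | hlt
    · rcases eq_or_ne x y with rfl | hxy
      · rw [TCadd_neg]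
        simpa using le_refl (‖x‖)
      · have hy0 : y ≠ 0 := by
          rintro rfl
          exact hxy (by simpa using heq)
        have hny : (-y : ℂ) ≠ -x := fun h' => hxy (by simpa using h'.symm)
        rw [TCadd_arc hny (by simpa using heq.symm)]
        exact ⟨-y, right_mem_segment ℝ x (-y),
          prj_of_abs (by simpa using heq.symm) (by simpa using hy0)⟩
    · rw [TCadd_small (by simpa using hlt)]
      rfl
  rcases lt_trichotomy (‖z‖) (‖y‖) with hlt | heq | hgt
  · rw [TCadd_big hlt, mem_singleton_iff] at h
    subst h
    rw [TCadd_neg]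
    exact hlt.le
  · -- arc case
    have hy0 : y ≠ 0 := by
      rintro rfl
      apply hzy
      rw [neg_zero]
      simpa using heq
    have hr : 0 < ‖y‖ := norm_pos_iff.mpr hy0
    rw [TCadd_arc hzy heq] at h
    obtain ⟨s, hs, rfl⟩ := h
    set r := ‖y‖ with hrdef
    have hs0 : s ≠ 0 := fun h' => hzy (seg_zero heq.symm hy0 (h' ▸ hs))
    have habs_s : 0 < ‖s‖ := norm_pos_iff.mpr hs0
    have hz0 : z ≠ 0 := by
      rintro rfl
      rw [← heq] at hr
      simp at hr
    rcases eq_or_ne (prj r s) y with hxy | hxy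
    · rw [hxy, TCadd_neg]
      exact heq.le
    · have hny : (-y : ℂ) ≠ -(prj r s) := fun h' => hxy (by simpa using h'.symm)
      have habsx : ‖prj r s‖ = r := prj_abs hr.le hs0
      rw [TCadd_arc hny (by rw [habsx]; simp [hrdef])]
      obtain ⟨a, b, ha, hb, hab, hsab⟩ := hs
      have hbne : b ≠ 0 := by
        rintro rfl
        have ha1 : a = 1 := by linarith
        rw [ha1] at hsab
        simp at hsab
        exact hxy (by rw [← hsab]; exact prj_of_abs rfl hy0)
      have hbpos : 0 < b := lt_of_le_of_ne hb (Ne.symm hbne)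
      set α : ℝ := ‖s‖ / (b * r) with hα
      set β : ℝ := a / b with hβ
      have hαpos : 0 < α := by positivity
      have hβnn : 0 ≤ β := by positivity
      set D : ℝ := α + β with hD
      have hDpos : 0 < D := by positivity
      have hprj : prj r s = (r / ‖s‖) • s := by
        unfold prj; rw [Complex.real_smul]
      have hcoef : α * (r / ‖s‖) = 1 / b := by
        rw [hα]; field_simp
      have hzz : z = α • (prj r s) + β • (-y) := by
        have h1 : α • prj r s = (1/b : ℝ) • s := by
          rw [hprj, smul_smul, hcoef]
        rw [h1, ← hsab]
        match_scalars <;> (try simp only [hβ]) <;> field_simp <;> ring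
      have hp : (α/D) • (prj r s) + (β/D) • (-y) = D⁻¹ • z := by
        rw [hzz]
        match_scalars <;> field_simp
      refine ⟨D⁻¹ • z, ⟨α/D, β/D, by positivity, by positivity,
        by field_simp [hDpos.ne']; exact hD.symm, hp⟩, ?_⟩
      rw [habsx, prj_smul r (by positivity) z, prj_of_abs heq hz0]
  · rw [TCadd_small hgt, mem_singleton_iff] at h
    rw [h]
    rw [TCadd_big (by simpa using hgt)]
    rfl


lemma prj_mul {a : ℂ} (ha : a ≠ 0) (r : ℝ) (s : ℂ) :
    prj (‖a‖ * r) (a * s) = a * prj r s := by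
  rcases eq_or_ne s 0 with rfl | hs
  · unfold prj; simp
  · unfold prj
    rw [norm_mul]
    have h1 : ‖a‖ * r / (‖a‖ * ‖s‖) = r / ‖s‖ := by
      rw [mul_div_mul_left _ _ (by simpa using ha)]
    rw [h1]; ring

lemma seg_mul (a x y : ℂ) : segment ℝ (a*x) (a*y) = (fun b => a * b) '' segment ℝ x y := by
  ext p
  constructor
  · rintro ⟨u, v, hu, hv, huv, rfl⟩
    refine ⟨u • x + v • y, ⟨u, v, hu, hv, huv, rfl⟩, ?_⟩
    simp only [Complex.real_smul]
    ring
  · rintro ⟨q, ⟨u, v, hu, hv, huv, rfl⟩, rfl⟩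
    refine ⟨u, v, hu, hv, huv, ?_⟩
    simp only [Complex.real_smul]
    ring

lemma TCadd_hdistrib (a x y : ℂ) :
    (fun b => a * b) '' TCadd x y = TCadd (a*x) (a*y) := by
  rcases eq_or_ne a 0 with rfl | ha
  · simp only [zero_mul]
    rw [TCadd_zero_zero]
    ext c
    simp only [mem_image, mem_singleton_iff]
    constructor
    · rintro ⟨b, hb, rfl⟩
      rfl
    · rintro rfl
      obtain ⟨b, hb⟩ := TCadd_nonempty x y
      exact ⟨b, hb, rfl⟩
  · have habs : 0 < ‖a‖ := norm_pos_iff.mpr ha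
    rcases eq_or_ne y (-x) with rfl | hyx
    · rw [TCadd_neg, show a * -x = -(a*x) by ring, TCadd_neg]
      ext c
      simp only [mem_image, mem_setOf_eq]
      constructor
      · rintro ⟨b, hb, rfl⟩
        rw [norm_mul, norm_mul]
        exact mul_le_mul_of_nonneg_left hb habs.le
      · intro hc
        refine ⟨a⁻¹ * c, ?_, by field_simp⟩
        rw [norm_mul] at hc
        rw [norm_mul, norm_inv]
        have h2 : ‖c‖ ≤ ‖a‖ * ‖x‖ := hc
        rw [inv_mul_le_iff₀ habs]
        exact h2
    · have hyx' : a * y ≠ -(a*x) := fun h =>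
        hyx (mul_left_cancel₀ ha (h.trans (by ring)))
      rcases lt_trichotomy (‖y‖) (‖x‖) with hlt | heq | hgt
      · rw [TCadd_big hlt,
          TCadd_big (by rw [norm_mul, norm_mul]; exact mul_lt_mul_of_pos_left hlt habs),
          image_singleton]
      · rw [TCadd_arc hyx heq,
          TCadd_arc hyx' (by rw [norm_mul, norm_mul, heq]), norm_mul, seg_mul,
          ← image_comp, ← image_comp]
        exact image_congr fun s _ => (prj_mul ha (‖x‖) s).symm
      · rw [TCadd_small hgt,
          TCadd_small (by rw [norm_mul, norm_mul]; exact mul_lt_mul_of_pos_left hgt habs),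
          image_singleton]

end TCaux

/-- The tropical complex hyperfield `TC` is a hyperfield. -/
theorem tropicalComplex_isHyperfield :
    IsHyperfield TCadd (· * ·) (Neg.neg : ℂ → ℂ) (0 : ℂ) (1 : ℂ) := by
  refine ⟨TCaux.TCadd_nonempty, TCaux.TCadd_comm, TCaux.TCadd_assoc, TCaux.TCadd_zero_hadd,
    ?_, TCaux.TCadd_hneg_unique, TCaux.TCadd_reversible, mul_comm, mul_assoc, one_mul,
    zero_mul, TCaux.TCadd_hdistrib, ?_, fun x hx => ⟨x⁻¹, mul_inv_cancel₀ hx⟩⟩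
  · intro x
    rw [TCaux.TCadd_neg]
    simpa using norm_nonneg x
  · exact zero_ne_one
end

section
/- Let p = ⊞_{i=0}^n c_i ⊙ X^i be a univariate polynomial over TC, and suppose a ∈ TC is such that there exist indices j_1, …, j_m with |c_{j_k} a^{j_k}| all equal for k = 1, …, m, strictly greater than |c_i a^i| for all other nonzero indices i, and -c_0 ∈ ⊞_{k=1}^m c_{j_k} ⊙ a^{j_k}. Then a is a root of p, i.e., 0 ∈ p(a). -/
open Set
open scoped Classical

lemma TC_abs_arc (z v : ℂ) :
    ‖((‖z‖ / ‖v‖ : ℝ) : ℂ) * v‖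
      = if v = 0 then 0 else ‖z‖ := by
  rcases eq_or_ne v 0 with rfl | hv
  · simp
  · rw [if_neg hv, norm_mul, Complex.norm_real, Real.norm_eq_abs,
      abs_of_nonneg (by positivity), div_mul_cancel₀]
    exact norm_ne_zero_iff.mpr hv

lemma TCadd_abs_le {z w y : ℂ} (h : y ∈ TCadd z w) :
    ‖y‖ ≤ max (‖z‖) (‖w‖) := by
  unfold TCadd at h
  split_ifs at h with h1 h2 h3
  · exact le_max_of_le_left h
  · rw [Set.mem_singleton_iff] at h; subst h; exact le_max_left _ _
  · rw [Set.mem_singleton_iff] at h; subst h; exact le_max_right _ _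
  · obtain ⟨t, _, _, rfl⟩ := h
    rw [TC_abs_arc]
    split_ifs
    · positivity
    · exact le_max_left _ _

lemma TCadd_self_mem {z w : ℂ} (h : ‖w‖ ≤ ‖z‖) :
    z ∈ TCadd z w := by
  unfold TCadd
  split_ifs with h1 h2 h3
  · exact le_refl (‖z‖)
  · rfl
  · exact absurd h3 (not_lt.2 h)
  · have hz : z ≠ 0 := by
      intro hz0
      apply h1
      have hw0 : ‖w‖ = 0 := le_antisymm (by simpa [hz0] using h) (norm_nonneg _)
      rw [hz0, neg_zero]
      exact norm_eq_zero.mp hw0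
    refine ⟨1, zero_le_one, le_refl 1, ?_⟩
    have hv : ((1:ℝ):ℂ) * z + (1 - ((1:ℝ):ℂ)) * w = z := by push_cast; ring
    rw [hv, div_self (norm_ne_zero_iff.mpr hz)]
    simp

lemma TCadd_disc_mem {z u : ℂ} (h : ‖u‖ ≤ ‖z‖) :
    u ∈ TCadd z (-z) := by
  unfold TCadd; rw [if_pos rfl]; exact h

lemma TCadd_zero_right (z : ℂ) : TCadd z 0 = {z} := by
  rcases eq_or_ne z 0 with rfl | hz
  · unfold TCadd
    rw [if_pos (by simp)]
    ext c
    simp only [Set.mem_setOf_eq, map_zero, Set.mem_singleton_iff]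
    constructor
    · intro h; exact norm_eq_zero.mp (le_antisymm (by simpa using h) (norm_nonneg _))
    · rintro rfl; simp
  · unfold TCadd
    rw [if_neg (fun h => hz (by simpa using h.symm)), if_pos (by simpa using norm_pos_iff.mpr hz)]

lemma TCadd_eq_neg {z w y : ℂ} (h : y ∈ TCadd z w)
    (hlt : ‖y‖ < max (‖z‖) (‖w‖)) : w = -z := by
  unfold TCadd at h
  split_ifs at h with h1 h2 h3
  · exact h1
  · exfalso
    rw [Set.mem_singleton_iff] at h; subst h
    rw [max_eq_left h2.le] at hlt; exact lt_irrefl _ hlt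
  · exfalso
    rw [Set.mem_singleton_iff] at h; subst h
    rw [max_eq_right h3.le] at hlt; exact lt_irrefl _ hlt
  · exfalso
    have heq : ‖z‖ = ‖w‖ := le_antisymm (not_lt.1 h2) (not_lt.1 h3)
    have hz : z ≠ 0 := by
      intro hz0
      apply h1
      rw [hz0, neg_zero]
      apply norm_eq_zero.mp
      rw [← heq, hz0]; simp
    obtain ⟨t, ht0, ht1, rfl⟩ := h
    rw [TC_abs_arc] at hlt
    by_cases hv : (t:ℂ)*z + (1-(t:ℂ))*w = 0
    · have htz : (t:ℂ) * z = -((1-(t:ℂ)) * w) := by linear_combination hv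
      have habs : t * ‖z‖ = (1-t) * ‖z‖ := by
        have h' := congrArg (‖·‖) htz
        rw [norm_neg, norm_mul, norm_mul, Complex.norm_real, Real.norm_eq_abs,
          abs_of_nonneg ht0, ← heq] at h'
        have h1t : ‖1 - (t:ℂ)‖ = 1 - t := by
          rw [show (1 - (t:ℂ)) = (((1-t:ℝ)):ℂ) by push_cast; ring, Complex.norm_real, Real.norm_eq_abs,
            abs_of_nonneg (by linarith)]
        rw [h1t] at h'
        exact h'
      have ht : t = 1/2 := by
        have hzpos : 0 < ‖z‖ := norm_pos_iff.mpr hz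
        nlinarith
      apply h1
      rw [ht] at hv
      push_cast at hv
      linear_combination 2 * hv
    · rw [if_neg hv, ← heq, max_self] at hlt
      exact lt_irrefl _ hlt

lemma TCadd_nonempty (z w : ℂ) : (TCadd z w).Nonempty := by
  rcases le_or_gt (‖w‖) (‖z‖) with h | h
  · exact ⟨z, TCadd_self_mem h⟩
  · refine ⟨w, ?_⟩
    unfold TCadd
    rw [if_neg (fun he => absurd h (by simp [he])), if_neg (not_lt.2 h.le), if_pos h]
    rfl

lemma TCadd_right_mem {z w : ℂ} (h : ‖z‖ < ‖w‖) : w ∈ TCadd z w := by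
  unfold TCadd
  rw [if_neg (fun he => absurd h (by simp [he])), if_neg (not_lt.2 h.le), if_pos h]
  rfl

lemma hsum_cons (t : ℂ) (L : List ℂ) :
    hsum TCadd 0 (t :: L) = ⋃ b ∈ hsum TCadd 0 L, TCadd t b := rfl

lemma mem_hsum_cons {x t : ℂ} {L : List ℂ} :
    x ∈ hsum TCadd 0 (t :: L) ↔ ∃ b ∈ hsum TCadd 0 L, x ∈ TCadd t b := by
  rw [hsum_cons]; simp

lemma hsum_TC_nonempty : ∀ L : List ℂ, (hsum TCadd 0 L).Nonempty
  | [] => ⟨0, rfl⟩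
  | t :: L => by
    obtain ⟨b, hb⟩ := hsum_TC_nonempty L
    obtain ⟨y, hy⟩ := TCadd_nonempty t b
    exact ⟨y, mem_hsum_cons.mpr ⟨b, hb, hy⟩⟩

lemma hsum_TC_abs_le {B : ℝ} (hB : 0 ≤ B) :
    ∀ L : List ℂ, (∀ t ∈ L, ‖t‖ ≤ B) →
      ∀ y ∈ hsum TCadd 0 L, ‖y‖ ≤ B
  | [] => by
    intro _ y hy
    have : y = 0 := hy
    simp [this, hB]
  | t :: L => by
    intro hL y hy
    obtain ⟨b, hb, hy⟩ := mem_hsum_cons.mp hy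
    have h1 := hsum_TC_abs_le hB L (fun s hs => hL s (List.mem_cons_of_mem _ hs)) b hb
    exact (TCadd_abs_le hy).trans (max_le (hL t (List.mem_cons_self)) h1)

lemma hsum_TC_full {R : ℝ} {t : ℂ} {L : List ℂ} (ht : ‖t‖ = R)
    (hL : ∀ s ∈ L, ‖s‖ ≤ R) {x : ℂ}
    (hx : x ∈ hsum TCadd 0 (t :: L)) (hxR : ‖x‖ < R) :
    ∀ u, ‖u‖ ≤ R → u ∈ hsum TCadd 0 (t :: L) := by
  have hR0 : (0:ℝ) ≤ R := ht ▸ norm_nonneg _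
  obtain ⟨b, hb, hx⟩ := mem_hsum_cons.mp hx
  have hbR := hsum_TC_abs_le hR0 L hL b hb
  have hmax : max (‖t‖) (‖b‖) = R := by
    rw [ht]; exact max_eq_left (ht ▸ hbR)
  have hbt : b = -t := TCadd_eq_neg hx (by rw [hmax]; exact hxR)
  subst hbt
  intro u hu
  exact mem_hsum_cons.mpr ⟨-t, hb, TCadd_disc_mem (by rw [ht]; exact hu)⟩

lemma hsum_TC_filter (R : ℝ) :
    ∀ L : List ℂ,
      (∀ s ∈ L, ‖s‖ = R ∨ ‖s‖ < R) →
      (L.filter fun s => decide (‖s‖ = R)) ≠ [] →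
      ∀ x ∈ hsum TCadd 0 (L.filter fun s => decide (‖s‖ = R)),
        x ∈ hsum TCadd 0 L
  | [] => by intro _ h; simp at h
  | t :: L => by
    intro hd hne x hx
    have hdL : ∀ s ∈ L, ‖s‖ = R ∨ ‖s‖ < R :=
      fun s hs => hd s (List.mem_cons_of_mem _ hs)
    have hLle : ∀ s ∈ L, ‖s‖ ≤ R := by
      intro s hs
      rcases hdL s hs with h | h
      · exact h.le
      · exact h.le
    by_cases htR : ‖t‖ = R
    · have hR0 : (0:ℝ) ≤ R := htR ▸ norm_nonneg _
      rw [List.filter_cons, if_pos (decide_eq_true htR)] at hx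
      obtain ⟨b, hb, hxb⟩ := mem_hsum_cons.mp hx
      by_cases hF : (L.filter fun s => decide (‖s‖ = R)) = []
      · rw [hF] at hb
        have hb0 : b = 0 := hb
        subst hb0
        rw [TCadd_zero_right] at hxb
        have hxt : x = t := hxb
        subst hxt
        obtain ⟨b', hb'⟩ := hsum_TC_nonempty L
        have hb'R : ‖b'‖ ≤ R := hsum_TC_abs_le hR0 L hLle b' hb'
        exact mem_hsum_cons.mpr ⟨b', hb', TCadd_self_mem (by rw [htR]; exact hb'R)⟩
      · have hb' := hsum_TC_filter R L hdL hF b hb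
        exact mem_hsum_cons.mpr ⟨b, hb', hxb⟩
    · have htlt : ‖t‖ < R := (hd t (List.mem_cons_self)).resolve_left htR
      rw [List.filter_cons, if_neg (fun hc => htR (of_decide_eq_true hc))] at hx hne
      have hxL := hsum_TC_filter R L hdL hne x hx
      rcases lt_or_ge (‖t‖) (‖x‖) with h | h
      · exact mem_hsum_cons.mpr ⟨x, hxL, TCadd_right_mem h⟩
      · cases hFl : (L.filter fun s => decide (‖s‖ = R)) with
        | nil => exact absurd hFl hne
        | cons f F' =>
          have hfmem : ∀ s ∈ (L.filter fun s => decide (‖s‖ = R)),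
              ‖s‖ = R := by
            intro s hs
            exact of_decide_eq_true (List.mem_filter.1 hs).2
          have hfR : ‖f‖ = R := hfmem f (by rw [hFl]; exact List.mem_cons_self)
          have hF'le : ∀ s ∈ F', ‖s‖ ≤ R := by
            intro s hs
            exact (hfmem s (by rw [hFl]; exact List.mem_cons_of_mem _ hs)).le
          rw [hFl] at hx
          have hfull := hsum_TC_full hfR hF'le hx (lt_of_le_of_lt h htlt) (-t)
            (by rw [norm_neg]; exact htlt.le)
          have hneg := hsum_TC_filter R L hdL hne (-t) (by rw [hFl]; exact hfull)
          exact mem_hsum_cons.mpr ⟨-t, hneg, TCadd_disc_mem h⟩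

lemma sorted_lt_eq : ∀ (l₁ l₂ : List ℕ), l₁.Pairwise (· < ·) → l₂.Pairwise (· < ·) →
    (∀ x, x ∈ l₁ ↔ x ∈ l₂) → l₁ = l₂
  | [], [], _, _, _ => rfl
  | [], b :: l₂, _, _, h => absurd ((h b).2 (List.mem_cons_self)) List.not_mem_nil
  | a :: l₁, [], _, _, h => absurd ((h a).1 (List.mem_cons_self)) List.not_mem_nil
  | a :: l₁, b :: l₂, h₁, h₂, h => by
    have hab : a = b := by
      have ha := (h a).1 (List.mem_cons_self)
      have hb := (h b).2 (List.mem_cons_self)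
      rcases List.mem_cons.1 ha with h' | h'
      · exact h'
      · rcases List.mem_cons.1 hb with h'' | h''
        · exact h''.symm
        · exact absurd (lt_trans (List.rel_of_pairwise_cons h₂ h')
            (List.rel_of_pairwise_cons h₁ h'')) (lt_irrefl b)
    subst hab
    have htl : l₁ = l₂ := by
      apply sorted_lt_eq l₁ l₂ h₁.of_cons h₂.of_cons
      intro x
      constructor
      · intro hx
        rcases List.mem_cons.1 ((h x).1 (List.mem_cons_of_mem _ hx)) with rfl | h'
        · exact absurd (List.rel_of_pairwise_cons h₁ hx) (lt_irrefl x)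
        · exact h'
      · intro hx
        rcases List.mem_cons.1 ((h x).2 (List.mem_cons_of_mem _ hx)) with rfl | h'
        · exact absurd (List.rel_of_pairwise_cons h₂ hx) (lt_irrefl x)
        · exact h'
    rw [htl]


/-- If the monomials of maximal modulus at `a` are indexed by a
nonempty set `J` of nonzero indices, all of common modulus `R` strictly larger
than the modulus of every other nonzero-index monomial, and `-c₀` lies in the
hypersum of those maximal monomials, then `a` is a root of `p` over `TC`. -/
theorem TC_root_of_dominant_terms (n : ℕ) (c : ℕ → ℂ) (a : ℂ)
    (J : Finset ℕ) (hJne : J.Nonempty) (hJ : ∀ j ∈ J, 1 ≤ j ∧ j ≤ n) (R : ℝ)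
    (hR : ∀ j ∈ J, ‖c j * a ^ j‖ = R)
    (hlt : ∀ i, 1 ≤ i → i ≤ n → i ∉ J → ‖c i * a ^ i‖ < R)
    (hc0 : -c 0 ∈ hsum TCadd 0 ((J.sort (· ≤ ·)).map fun j => c j * a ^ j)) :
    (0 : ℂ) ∈ evalPoly TCadd (· * ·) 0 1 n c a := by
  have hpow_eq : ∀ i, hpow (· * ·) (1:ℂ) a i = a ^ i := by
    intro i
    induction i with
    | zero => rfl
    | succ k ih =>
      show a * hpow (· * ·) (1:ℂ) a k = a ^ (k + 1)
      rw [ih, pow_succ]; ring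
  unfold evalPoly
  have hlist : (List.range (n+1)).map (fun i => (· * ·) (c i) (hpow (· * ·) (1:ℂ) a i))
      = (List.range (n+1)).map (fun i => c i * a ^ i) := by
    apply List.map_congr_left
    intro i _
    show c i * hpow (· * ·) (1:ℂ) a i = _
    rw [hpow_eq]
  rw [hlist, List.range_succ_eq_map, List.map_cons, List.map_map]
  set g : ℕ → ℂ := fun i => c i * a ^ i with hg
  have hkey : -c 0 ∈ hsum TCadd 0 ((List.range n).map fun k => g (k + 1)) := by
    have hidx : (((List.range n).filter fun k => decide (k + 1 ∈ J)).map fun k => k + 1)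
        = J.sort (· ≤ ·) := by
      apply sorted_lt_eq
      · apply List.Pairwise.map _ (fun a b (hab : a < b) => Nat.add_lt_add_right hab 1)
        exact (List.pairwise_lt_range (n := n)).filter _
      · exact (Finset.sortedLT_sort J).pairwise
      · intro x
        simp only [List.mem_map, List.mem_filter, List.mem_range, decide_eq_true_eq,
          Finset.mem_sort]
        constructor
        · rintro ⟨k, ⟨_, hk⟩, rfl⟩
          exact hk
        · intro hx
          obtain ⟨h1, h2⟩ := hJ x hx
          exact ⟨x - 1, ⟨by omega, by rwa [Nat.sub_add_cancel h1]⟩, by omega⟩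
    have hfilter : (((List.range n).map fun k => g (k + 1)).filter
        fun s => decide (‖s‖ = R)) = (J.sort (· ≤ ·)).map g := by
      rw [List.filter_map]
      have hcng : ((List.range n).filter ((fun s => decide (‖s‖ = R)) ∘
          fun k => g (k + 1))) = (List.range n).filter fun k => decide (k + 1 ∈ J) := by
        apply List.filter_congr
        intro k hk
        rw [List.mem_range] at hk
        apply decide_eq_decide.mpr
        constructor
        · intro habs
          by_contra hkJ
          exact absurd habs (ne_of_lt (hlt (k+1) (by omega) (by omega) hkJ))
        · intro hkJ
          exact hR (k+1) hkJ
      rw [hcng, ← hidx, List.map_map]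
      rfl
    apply hsum_TC_filter R
    · intro s hs
      obtain ⟨k, hk, rfl⟩ := List.mem_map.1 hs
      rw [List.mem_range] at hk
      by_cases hkJ : k + 1 ∈ J
      · exact Or.inl (hR (k+1) hkJ)
      · exact Or.inr (hlt (k+1) (by omega) (by omega) hkJ)
    · intro hcon
      obtain ⟨j, hj⟩ := hJne
      have hmem : g j ∈ (J.sort (· ≤ ·)).map g :=
        List.mem_map_of_mem ((Finset.mem_sort _).2 hj)
      rw [← hfilter, hcon] at hmem
      exact List.not_mem_nil hmem
    · rw [hfilter]
      exact hc0
  apply mem_hsum_cons.mpr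
  refine ⟨-c 0, hkey, ?_⟩
  have h0 : (0:ℂ) ∈ TCadd (c 0 * a ^ 0) (-(c 0 * a ^ 0)) :=
    TCadd_disc_mem (by simp)
  simpa using h0
end

section
/- A hyperfield H is algebraically closed (every non-constant univariate polynomial over H has a root) if and only if the canonical hyperfield homomorphism f: H → K to the Krasner hyperfield, sending 0 to 0 and all nonzero elements to 1, is relatively algebraically closed. -/
open Set
open scoped Classical

lemma Khsum_nonempty (l : List Bool) : (hsum Kadd false l).Nonempty := by
  induction l with
  | nil => exact ⟨false, rfl⟩
  | cons a l ih =>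
    obtain ⟨b, hb⟩ := ih
    have : (Kadd a b).Nonempty := by
      cases a <;> cases b <;> simp [Kadd]
    obtain ⟨x, hx⟩ := this
    exact ⟨x, Set.mem_biUnion hb hx⟩

lemma Ktrue_mem (l : List Bool) : true ∈ hsum Kadd false l ↔ true ∈ l := by
  induction l with
  | nil => simp [hsum]
  | cons a l ih =>
    cases a with
    | false =>
      simp only [hsum, Set.mem_iUnion₂]
      constructor
      · rintro ⟨b, hb, hKb⟩
        simp [Kadd] at hKb
        subst hKb
        simp [ih.mp hb]
      · intro hl
        simp at hl
        exact ⟨true, ih.mpr hl, by simp [Kadd]⟩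
    | true =>
      simp only [hsum, Set.mem_iUnion₂]
      constructor
      · intro _; simp
      · intro _
        obtain ⟨b, hb⟩ := Khsum_nonempty l
        refine ⟨b, hb, ?_⟩
        cases b <;> simp [Kadd]

lemma Kfalse_mem (l : List Bool) : false ∈ hsum Kadd false l ↔ l.count true ≠ 1 := by
  induction l with
  | nil => simp [hsum]
  | cons a l ih =>
    cases a with
    | false =>
      simp only [hsum, Set.mem_iUnion₂]
      rw [List.count_cons]
      simp only [show (false == true) = false by rfl]
      constructor
      · rintro ⟨b, hb, hKb⟩
        simp [Kadd] at hKb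
        subst hKb
        simpa using ih.mp hb
      · intro hc
        exact ⟨false, ih.mpr (by simpa using hc), by simp [Kadd]⟩
    | true =>
      rw [show List.count true (true :: l) = List.count true l + 1 by simp]
      simp only [hsum, Set.mem_iUnion₂]
      have hcount : l.count true + 1 ≠ 1 ↔ true ∈ l := by
        rw [← List.count_pos_iff]
        omega
      rw [hcount, ← Ktrue_mem]
      constructor
      · rintro ⟨b, hb, hKb⟩
        cases b with
        | false => simp [Kadd] at hKb
        | true => exact hb
      · intro ht
        exact ⟨true, ht, by simp [Kadd]⟩

lemma countP_range_one_iff (p : ℕ → Bool) :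
    ∀ N : ℕ, ((List.range N).countP p = 1 ↔
      ∃ m, m < N ∧ p m = true ∧ ∀ i, i < N → p i = true → i = m)
  | 0 => by simp
  | N + 1 => by
    have hIH := countP_range_one_iff p N
    by_cases hN : p N = true
    · rw [show (List.range (N+1)).countP p = (List.range N).countP p + 1 by
        simp [List.range_succ, List.countP_append, List.countP_cons, hN]]
      have hz : (List.range N).countP p + 1 = 1 ↔ (List.range N).countP p = 0 := by omega
      rw [hz, List.countP_eq_zero]
      constructor
      · intro hall
        refine ⟨N, Nat.lt_succ_self N, hN, fun i hi hpi => ?_⟩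
        rcases Nat.lt_succ_iff_lt_or_eq.mp hi with hi' | hi'
        · exact absurd hpi (by simpa using hall i (List.mem_range.mpr hi'))
        · exact hi'
      · rintro ⟨m, hm, hpm, huniq⟩ i hi
        have hiN := List.mem_range.mp hi
        intro hpi
        have h1 := huniq i (by omega) hpi
        have h2 := huniq N (Nat.lt_succ_self N) hN
        omega
    · rw [show (List.range (N+1)).countP p = (List.range N).countP p by
        simp [List.range_succ, List.countP_append, List.countP_cons, hN]]
      rw [hIH]
      constructor
      · rintro ⟨m, hm, hpm, huniq⟩
        exact ⟨m, by omega, hpm, fun i hi hpi => by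
          rcases Nat.lt_succ_iff_lt_or_eq.mp hi with hi' | hi'
          · exact huniq i hi' hpi
          · subst hi'; exact absurd hpi hN⟩
      · rintro ⟨m, hm, hpm, huniq⟩
        have hmN : m < N := by
          rcases Nat.lt_succ_iff_lt_or_eq.mp hm with h' | h'
          · exact h'
          · subst h'; exact absurd hpm hN
        exact ⟨m, hmN, hpm, fun i hi hpi => huniq i (by omega) hpi⟩

section Hlemmas

variable {H : Type*} {add : H → H → Set H} {mul : H → H → H} {neg : H → H} {zero one : H}

lemma hmul_zero' (h : IsHyperfield add mul neg zero one) (x : H) : mul x zero = zero := by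
  rw [h.hmul_comm]; exact h.zero_hmul x

lemma hmul_one' (h : IsHyperfield add mul neg zero one) (x : H) : mul x one = x := by
  rw [h.hmul_comm]; exact h.one_hmul x

lemma hsum_zero_cons (h : IsHyperfield add mul neg zero one) (l : List H) :
    hsum add zero (zero :: l) = hsum add zero l := by
  show (⋃ b ∈ hsum add zero l, add zero b) = hsum add zero l
  simp [h.zero_hadd]

lemma hsum_all_zero (h : IsHyperfield add mul neg zero one) (l : List H)
    (hz : ∀ x ∈ l, x = zero) : hsum add zero l = {zero} := by
  induction l with
  | nil => rfl
  | cons a l ih =>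
    have ha : a = zero := hz a (by simp)
    subst ha
    rw [hsum_zero_cons h]
    exact ih (fun x hx => hz x (by simp [hx]))

lemma hsum_append_left (h : IsHyperfield add mul neg zero one) (l1 l2 : List H)
    (hz : ∀ x ∈ l1, x = zero) : hsum add zero (l1 ++ l2) = hsum add zero l2 := by
  induction l1 with
  | nil => simp
  | cons a l1 ih =>
    have ha : a = zero := hz a (by simp)
    subst ha
    rw [List.cons_append, hsum_zero_cons h]
    exact ih (fun x hx => hz x (by simp [hx]))

lemma hsum_append_right (h : IsHyperfield add mul neg zero one) (l1 l2 : List H)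
    (hz : ∀ x ∈ l2, x = zero) : hsum add zero (l1 ++ l2) = hsum add zero l1 := by
  induction l1 with
  | nil => rw [List.nil_append, hsum_all_zero h l2 hz]; rfl
  | cons a l1 ih =>
    show (⋃ b ∈ hsum add zero (l1 ++ l2), add a b) = ⋃ b ∈ hsum add zero l1, add a b
    rw [ih]

lemma image_hsum (h : IsHyperfield add mul neg zero one) (k : H) :
    ∀ l : List H, (mul k) '' hsum add zero l = hsum add zero (l.map (mul k))
  | [] => by
    show (mul k) '' {zero} = {zero}
    rw [Set.image_singleton, hmul_zero' h]
  | a :: l => by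
    show (mul k) '' (⋃ b ∈ hsum add zero l, add a b)
        = ⋃ b ∈ hsum add zero (l.map (mul k)), add (mul k a) b
    rw [Set.image_iUnion₂, ← image_hsum h k l, Set.biUnion_image]
    exact Set.iUnion₂_congr fun b _ => h.hdistrib k a b

lemma hpow_add' (h : IsHyperfield add mul neg zero one) (a : H) (p q : ℕ) :
    hpow mul one a (p + q) = mul (hpow mul one a p) (hpow mul one a q) := by
  induction p with
  | zero => simp [hpow, h.one_hmul]
  | succ p ih =>
    rw [show p + 1 + q = (p + q) + 1 by omega]
    show mul a (hpow mul one a (p + q)) = mul (mul a (hpow mul one a p)) (hpow mul one a q)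
    rw [ih, ← h.hmul_assoc]

lemma evalPoly_at_zero (h : IsHyperfield add mul neg zero one) (n : ℕ) (c : ℕ → H) :
    evalPoly add mul zero one n c zero = {c 0} := by
  have hlist : (List.range (n + 1)).map (fun i => mul (c i) (hpow mul one zero i))
      = c 0 :: (List.range n).map (fun _ => zero) := by
    rw [List.range_succ_eq_map, List.map_cons, List.map_map]
    congr 1
    · exact hmul_one' h _
    · apply List.map_congr_left
      intro i _
      show mul (c (i + 1)) (mul zero (hpow mul one zero i)) = zero
      rw [h.zero_hmul, hmul_zero' h]
  unfold evalPoly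
  rw [hlist]
  show (⋃ b ∈ hsum add zero _, add (c 0) b) = {c 0}
  rw [hsum_all_zero h _ (by simp)]
  simp [h.hadd_comm (c 0) zero, h.zero_hadd]

end Hlemmas

lemma K_hpow_true : ∀ i : ℕ, hpow and true true i = true
  | 0 => rfl
  | i + 1 => by
    show and true (hpow and true true i) = true
    rw [K_hpow_true i]
    rfl

lemma KevalPoly_true (n : ℕ) (g : ℕ → Bool) :
    evalPoly Kadd and false true n g true = hsum Kadd false ((List.range (n + 1)).map g) := by
  unfold evalPoly
  refine congrArg (hsum Kadd false) ?_
  apply List.map_congr_left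
  intro i _
  rw [K_hpow_true i]
  exact Bool.and_true _

lemma KevalPoly_false (n : ℕ) (g : ℕ → Bool) :
    evalPoly Kadd and false true n g false
      = hsum Kadd false (g 0 :: (List.range n).map fun _ => false) := by
  unfold evalPoly
  refine congrArg (hsum Kadd false) ?_
  rw [List.range_succ_eq_map, List.map_cons, List.map_map]
  congr 1
  · exact Bool.and_true _
  · apply List.map_congr_left
    intro i _
    show and (g (i + 1)) (and false (hpow and true false i)) = false
    simp

lemma count_true_map_range (g : ℕ → Bool) (N : ℕ) :
    ((List.range N).map g).count true = (List.range N).countP (fun i => g i) := by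
  simp [List.count, List.countP_map, Function.comp]
  rfl

/-- a hyperfield `H` is algebraically closed iff the canonical
homomorphism `H → K` to the Krasner hyperfield (sending `0 ↦ 0` and all
nonzero elements to `1`) is relatively algebraically closed. -/
theorem algClosed_iff_toKrasner_RAC {H : Type*}
    (add : H → H → Set H) (mul : H → H → H) (neg : H → H) (zero one : H)
    (h : IsHyperfield add mul neg zero one) :
    (∀ (n : ℕ) (c : ℕ → H), 1 ≤ n → c n ≠ zero →
        ∃ a : H, zero ∈ evalPoly add mul zero one n c a) ↔
      IsRAC add mul zero one Kadd and false true
        (fun x : H => if x = zero then false else true) := by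
  set f : H → Bool := fun x => if x = zero then false else true with hf
  have hfz : ∀ x : H, f x = true ↔ x ≠ zero := by
    intro x
    by_cases hx : x = zero <;> simp [hf, hx]
  have hcountconv : ∀ (g : ℕ → Bool) (N : ℕ),
      ((List.range N).map g).count true = (List.range N).countP (fun i => g i) :=
    count_true_map_range
  constructor
  · -- alg closed → RAC
    intro hAC n c b hb
    cases b with
    | false =>
      rw [KevalPoly_false, Kfalse_mem] at hb
      have hc0 : c 0 = zero := by
        by_contra hc0
        apply hb
        rw [List.count_cons, List.count_eq_zero.mpr (by simp)]
        have : f (c 0) = true := (hfz _).mpr hc0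
        simp [this]
      refine ⟨zero, by simp [hf], ?_⟩
      rw [evalPoly_at_zero h]
      simp [hc0]
    | true =>
      rw [KevalPoly_true, Kfalse_mem, hcountconv] at hb
      by_cases hex : ∃ i, i ≤ n ∧ c i ≠ zero
      · obtain ⟨i0, hi0n, hi0⟩ := hex
        have hexg : ∃ i, c i ≠ zero := ⟨i0, hi0⟩
        set m := Nat.find hexg with hm
        have hcm : c m ≠ zero := Nat.find_spec hexg
        have hmin : ∀ i, i < m → c i = zero := by
          intro i hi
          by_contra hci
          exact absurd (Nat.find_min' hexg hci) (by omega)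
        set j := Nat.findGreatest (fun i => c i ≠ zero) n with hj
        have hcj : c j ≠ zero := Nat.findGreatest_spec (P := fun i => c i ≠ zero) hi0n hi0
        have hjn : j ≤ n := Nat.findGreatest_le (P := fun i => c i ≠ zero) n
        have hmax : ∀ i, j < i → i ≤ n → c i = zero := by
          intro i h1 h2
          by_contra hci
          exact Nat.findGreatest_is_greatest (P := fun i => c i ≠ zero) h1 h2 hci
        have hmj : m ≤ j := Nat.find_min' hexg hcj
        have hmlt : m < j := by
          rcases lt_or_eq_of_le hmj with h' | h'
          · exact h'
          · exfalso
            apply hb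
            rw [countP_range_one_iff]
            refine ⟨m, by omega, (hfz _).mpr hcm, ?_⟩
            intro i hi hpi
            have hci : c i ≠ zero := (hfz _).mp hpi
            have h1 : m ≤ i := Nat.find_min' hexg hci
            have h2 : i ≤ j := Nat.le_findGreatest (by omega) hci
            omega
        -- apply algebraic closedness to the shifted polynomial
        obtain ⟨a, ha⟩ := hAC (j - m) (fun i => c (i + m)) (by omega)
          (by show c (j - m + m) ≠ zero; rw [show j - m + m = j by omega]; exact hcj)
        have hane : a ≠ zero := by
          intro haz
          rw [haz, evalPoly_at_zero h] at ha
          exact hcm (by simpa using ha.symm)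
        refine ⟨a, (hfz a).mpr hane, ?_⟩
        set t : ℕ → H := fun i => mul (c i) (hpow mul one a i) with ht
        set k : H := hpow mul one a m with hk
        have hsplit : List.range (n + 1) =
            List.range m ++ ((List.range (j - m + 1)).map (fun i => m + i)
              ++ (List.range (n - j)).map (fun i => m + (j - m + 1 + i))) := by
          rw [show n + 1 = m + (j - m + 1 + (n - j)) by omega, List.range_add,
            List.range_add, List.map_append, List.map_map]
          rfl
        show zero ∈ hsum add zero ((List.range (n + 1)).map t)
        rw [hsplit, List.map_append, List.map_append]
        rw [hsum_append_left h _ _ (by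
          intro x hx
          simp only [List.mem_map, List.mem_range] at hx
          obtain ⟨i, hi, rfl⟩ := hx
          show mul (c i) (hpow mul one a i) = zero
          rw [hmin i (by omega), h.zero_hmul])]
        rw [hsum_append_right h _ _ (by
          intro x hx
          simp only [List.map_map, List.mem_map, List.mem_range] at hx
          obtain ⟨i, hi, rfl⟩ := hx
          show mul (c (m + (j - m + 1 + i))) (hpow mul one a (m + (j - m + 1 + i))) = zero
          rw [hmax (m + (j - m + 1 + i)) (by omega) (by omega), h.zero_hmul])]
        have hB : (List.map t ((List.range (j - m + 1)).map (fun i => m + i)))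
            = List.map (mul k) ((List.range (j - m + 1)).map
                (fun i => mul (c (i + m)) (hpow mul one a i))) := by
          rw [List.map_map, List.map_map]
          apply List.map_congr_left
          intro i _
          show mul (c (m + i)) (hpow mul one a (m + i))
              = mul k (mul (c (i + m)) (hpow mul one a i))
          rw [hpow_add' h, show c (m + i) = c (i + m) by rw [Nat.add_comm]]
          rw [← h.hmul_assoc, h.hmul_comm (c (i + m)) (hpow mul one a m), h.hmul_assoc]
        rw [hB, ← image_hsum h]
        exact ⟨zero, ha, hmul_zero' h k⟩
      · push_neg at hex
        refine ⟨one, (hfz one).mpr (Ne.symm h.zero_ne_one), ?_⟩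
        show zero ∈ hsum add zero _
        rw [hsum_all_zero h _ (by
          intro x hx
          simp only [List.mem_map, List.mem_range] at hx
          obtain ⟨i, hi, rfl⟩ := hx
          show mul (c i) (hpow mul one one i) = zero
          rw [hex i (by omega), h.zero_hmul])]
        rfl
  · -- RAC → alg closed
    intro hRAC n c hn hcn
    by_cases hone : ∀ i, i < n → c i = zero
    · obtain ⟨a, -, ha⟩ := hRAC n c false (by
        rw [KevalPoly_false, Kfalse_mem, List.count_cons,
          List.count_eq_zero.mpr (by simp)]
        have : f (c 0) = false := by simp [hf, hone 0 (by omega)]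
        simp [this])
      exact ⟨a, ha⟩
    · push_neg at hone
      obtain ⟨i0, hi0n, hi0⟩ := hone
      obtain ⟨a, -, ha⟩ := hRAC n c true (by
        rw [KevalPoly_true, Kfalse_mem, hcountconv]
        intro hcount
        rw [countP_range_one_iff] at hcount
        obtain ⟨m, hmN, hpm, huniq⟩ := hcount
        have h1 := huniq i0 (by omega) ((hfz _).mpr hi0)
        have h2 := huniq n (by omega) ((hfz _).mpr hcn)
        omega)
      exact ⟨a, ha⟩
end
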